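/- For every natural number m ≥ 2, both Sh₊(m,m) and Sh₋(m,m) are even numbers. -/

import Mathlib

/-- A `(p,q)`-shuffle: a permutation of `Fin (p+q)` strictly increasing on the
first `p` positions and on the last `q` positions. -/
def IsShuffle (p q : ℕ) (σ : Equiv.Perm (Fin (p + q))) : Prop :=
  (∀ i j : Fin (p + q), i < j → (j : ℕ) < p → σ i < σ j) ∧
  (∀ i j : Fin (p + q), i < j → p ≤ (i : ℕ) → σ i < σ j)

/-- `Sh₊(p,q)`: the number of `(p,q)`-shuffles of sign `+1`. -/
noncomputable def ShPos (p q : ℕ) : ℕ :=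
  Nat.card {σ : Equiv.Perm (Fin (p + q)) // IsShuffle p q σ ∧ Equiv.Perm.sign σ = 1}

/-- `Sh₋(p,q)`: the number of `(p,q)`-shuffles of sign `−1`. -/
noncomputable def ShNeg (p q : ℕ) : ℕ :=
  Nat.card {σ : Equiv.Perm (Fin (p + q)) // IsShuffle p q σ ∧ Equiv.Perm.sign σ = -1}

open Equiv Equiv.Perm Finset

instance (p q : ℕ) : DecidablePred (IsShuffle p q) := fun σ => by
  unfold IsShuffle; infer_instance

/-! ### The block swap permutation -/

/-- The permutation of `Fin (m+m)` adding `m` (mod `2m`). -/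
def blockSwap (m : ℕ) : Equiv.Perm (Fin (m + m)) := finRotate (m + m) ^ m

lemma finRotate_pow_val {n : ℕ} (k : ℕ) (i : Fin n) :
    (((finRotate n ^ k) i : Fin n) : ℕ) = ((i : ℕ) + k) % n := by
  cases n with
  | zero => exact i.elim0
  | succ n =>
    induction k with
    | zero => simp [Nat.mod_eq_of_lt i.isLt]
    | succ k ih =>
      rw [pow_succ', Equiv.Perm.mul_apply, finRotate_succ_apply, Fin.add_def, ih,
        Fin.val_one', ← Nat.add_assoc, Nat.add_mod ((i : ℕ) + k) 1]

lemma blockSwap_val {m : ℕ} (i : Fin (m + m)) :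
    ((blockSwap m i : Fin (m + m)) : ℕ) = ((i : ℕ) + m) % (m + m) :=
  finRotate_pow_val m i

lemma blockSwap_val_lt {m : ℕ} (i : Fin (m + m)) (h : (i : ℕ) < m) :
    ((blockSwap m i : Fin (m + m)) : ℕ) = (i : ℕ) + m := by
  rw [blockSwap_val, Nat.mod_eq_of_lt (by omega)]

lemma blockSwap_val_ge {m : ℕ} (i : Fin (m + m)) (h : m ≤ (i : ℕ)) :
    ((blockSwap m i : Fin (m + m)) : ℕ) = (i : ℕ) - m := by
  have hi := i.isLt
  rw [blockSwap_val, show (i : ℕ) + m = ((i : ℕ) - m) + (m + m) by omega,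
    Nat.add_mod_right, Nat.mod_eq_of_lt (by omega)]

lemma blockSwap_sq (m : ℕ) : blockSwap m * blockSwap m = 1 := by
  ext i
  rw [Equiv.Perm.mul_apply]
  have h1 := blockSwap_val (blockSwap m i)
  rw [blockSwap_val i, Nat.mod_add_mod, show (i : ℕ) + m + m = (i : ℕ) + (m + m) by ring,
    Nat.add_mod_right, Nat.mod_eq_of_lt i.isLt] at h1
  simpa using h1

lemma sign_blockSwap (m : ℕ) (hm : 0 < m) :
    Equiv.Perm.sign (blockSwap m) = (-1) ^ m := by
  have h : Equiv.Perm.sign (finRotate (m + m)) = -1 := by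
    obtain ⟨k, rfl⟩ : ∃ k, m = k + 1 := ⟨m - 1, by omega⟩
    have h2 : Equiv.Perm.sign (finRotate (k + 1 + (k + 1))) = (-1) ^ (k + 1 + k) := by
      rw [sign_finRotate, show k + 1 + (k + 1) - 1 = k + 1 + k by omega]
    rw [h2]
    exact Odd.neg_one_pow ⟨k, by ring⟩
  rw [blockSwap, map_pow, h]

lemma IsShuffle.mul_blockSwap {m : ℕ} {σ : Equiv.Perm (Fin (m + m))}
    (h : IsShuffle m m σ) : IsShuffle m m (σ * blockSwap m) := by
  constructor
  · intro i j hij hj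
    have hi : (i : ℕ) < m := lt_trans (Fin.lt_def.mp hij) hj
    simp only [Equiv.Perm.mul_apply]
    apply h.2
    · rw [Fin.lt_def, blockSwap_val_lt i hi, blockSwap_val_lt j hj]
      omega
    · rw [blockSwap_val_lt i hi]; omega
  · intro i j hij hi
    have hj : m ≤ (j : ℕ) := le_trans hi (Fin.lt_def.mp hij).le
    simp only [Equiv.Perm.mul_apply]
    apply h.1
    · rw [Fin.lt_def, blockSwap_val_ge i hi, blockSwap_val_ge j hj]
      have := Fin.lt_def.mp hij
      omega
    · rw [blockSwap_val_ge j hj]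
      have := j.isLt
      omega

/-! ### Even cardinality from a fixed-point-free involution -/

lemma even_card_of_fpf {α : Type*} [Fintype α] [DecidableEq α] (f : Equiv.Perm α)
    (h2 : f * f = 1) (hf : ∀ x, f x ≠ x) : Even (Fintype.card α) := by
  have hpow : f ^ (2 : ℕ) ^ (1 : ℕ) = 1 := by
    rw [pow_one, sq, h2]
  have hmod := Equiv.Perm.card_compl_support_modEq (p := 2) (n := 1) hpow
  have hsupp : (Equiv.Perm.support f)ᶜ = (∅ : Finset α) := by
    ext x
    simp [Equiv.Perm.mem_support, hf x]
  rw [hsupp, Finset.card_empty] at hmod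
  have hcard : Fintype.card α % 2 = 0 := by
    have h0 := hmod.symm
    simpa [Nat.ModEq] using h0
  exact Nat.even_iff.mpr hcard

/-! ### Shuffles are in bijection with `m`-element subsets -/

/-- The image of the first block under a permutation. -/
def fstSet {m : ℕ} (σ : Equiv.Perm (Fin (m + m))) : Finset (Fin (m + m)) :=
  Finset.image (fun i : Fin m => σ (Fin.castAdd m i)) Finset.univ

lemma IsShuffle.strictMono_fst {m : ℕ} {σ : Equiv.Perm (Fin (m + m))}
    (h : IsShuffle m m σ) : StrictMono fun i : Fin m => σ (Fin.castAdd m i) := by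
  intro i j hij
  exact h.1 _ _ hij j.isLt

lemma IsShuffle.strictMono_snd {m : ℕ} {σ : Equiv.Perm (Fin (m + m))}
    (h : IsShuffle m m σ) : StrictMono fun i : Fin m => σ (Fin.natAdd m i) := by
  intro i j hij
  exact h.2 _ _ (Nat.add_lt_add_left hij m) (Nat.le_add_right m (i : ℕ))

lemma card_fstSet {m : ℕ} {σ : Equiv.Perm (Fin (m + m))} (h : IsShuffle m m σ) :
    (fstSet σ).card = m := by
  rw [fstSet, Finset.card_image_of_injective _ h.strictMono_fst.injective,
    Finset.card_univ, Fintype.card_fin]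

lemma mem_fstSet {m : ℕ} {σ : Equiv.Perm (Fin (m + m))} (i : Fin m) :
    σ (Fin.castAdd m i) ∈ fstSet σ :=
  Finset.mem_image_of_mem _ (Finset.mem_univ i)

lemma mem_compl_fstSet {m : ℕ} {σ : Equiv.Perm (Fin (m + m))} (i : Fin m) :
    σ (Fin.natAdd m i) ∈ (fstSet σ)ᶜ := by
  rw [Finset.mem_compl, fstSet, Finset.mem_image]
  rintro ⟨j, -, hj⟩
  have hv : ((Fin.castAdd m j : Fin (m + m)) : ℕ) = ((Fin.natAdd m i : Fin (m + m)) : ℕ) :=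
    congrArg Fin.val (σ.injective hj)
  rw [Fin.coe_castAdd, Fin.coe_natAdd] at hv
  have := j.isLt
  omega

lemma card_compl_fstSet {m : ℕ} {σ : Equiv.Perm (Fin (m + m))} (h : IsShuffle m m σ) :
    (fstSet σ)ᶜ.card = m := by
  rw [Finset.card_compl, card_fstSet h, Fintype.card_fin]
  omega

lemma fstSet_injective {m : ℕ} {σ τ : Equiv.Perm (Fin (m + m))}
    (hσ : IsShuffle m m σ) (hτ : IsShuffle m m τ) (h : fstSet σ = fstSet τ) : σ = τ := by
  have e1 : (fun i : Fin m => σ (Fin.castAdd m i)) =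
      (fstSet σ).orderEmbOfFin (card_fstSet hσ) :=
    Finset.orderEmbOfFin_unique _ (fun i => mem_fstSet i) hσ.strictMono_fst
  have e2 : (fun i : Fin m => τ (Fin.castAdd m i)) =
      (fstSet σ).orderEmbOfFin (card_fstSet hσ) := by
    refine Finset.orderEmbOfFin_unique _ (fun i => ?_) hτ.strictMono_fst
    rw [h]; exact mem_fstSet i
  have e3 : (fun i : Fin m => σ (Fin.natAdd m i)) =
      ((fstSet σ)ᶜ).orderEmbOfFin (card_compl_fstSet hσ) :=
    Finset.orderEmbOfFin_unique _ (fun i => mem_compl_fstSet i) hσ.strictMono_snd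
  have e4 : (fun i : Fin m => τ (Fin.natAdd m i)) =
      ((fstSet σ)ᶜ).orderEmbOfFin (card_compl_fstSet hσ) := by
    refine Finset.orderEmbOfFin_unique _ (fun i => ?_) hτ.strictMono_snd
    rw [h]; exact mem_compl_fstSet i
  have h1 : ∀ i : Fin m, σ (Fin.castAdd m i) = τ (Fin.castAdd m i) := by
    intro i; rw [funext_iff] at e1 e2; rw [e1 i, e2 i]
  have h2 : ∀ i : Fin m, σ (Fin.natAdd m i) = τ (Fin.natAdd m i) := by
    intro i; rw [funext_iff] at e3 e4; rw [e3 i, e4 i]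
  exact Equiv.ext fun x => Fin.addCases h1 h2 x

set_option maxHeartbeats 1000000 in
lemma exists_shuffle {m : ℕ} (S : Finset (Fin (m + m))) (hS : S.card = m) :
    ∃ σ : Equiv.Perm (Fin (m + m)), IsShuffle m m σ ∧ fstSet σ = S := by
  have hSc : Sᶜ.card = m := by
    rw [Finset.card_compl, hS, Fintype.card_fin]; omega
  set f := S.orderEmbOfFin hS with hf
  set g := Sᶜ.orderEmbOfFin hSc with hg
  set F : Fin (m + m) → Fin (m + m) :=
    fun x => Fin.addCases (fun i => f i) (fun i => g i) x with hF
  have hFl : ∀ i : Fin m, F (Fin.castAdd m i) = f i := fun i => Fin.addCases_left i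
  have hFr : ∀ i : Fin m, F (Fin.natAdd m i) = g i := fun i => Fin.addCases_right i
  have hbij : Function.Bijective F := by
    constructor
    · intro x y hxy
      induction x using Fin.addCases with
      | left i =>
        induction y using Fin.addCases with
        | left j =>
          rw [hFl, hFl] at hxy
          rw [f.injective hxy]
        | right j =>
          rw [hFl, hFr] at hxy
          have h1 : f i ∈ S := Finset.orderEmbOfFin_mem S hS i
          have h2 : g j ∈ Sᶜ := Finset.orderEmbOfFin_mem Sᶜ hSc j
          rw [hxy] at h1
          exact absurd h1 (Finset.mem_compl.mp h2)
      | right i =>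
        induction y using Fin.addCases with
        | left j =>
          rw [hFr, hFl] at hxy
          have h1 : f j ∈ S := Finset.orderEmbOfFin_mem S hS j
          have h2 : g i ∈ Sᶜ := Finset.orderEmbOfFin_mem Sᶜ hSc i
          rw [← hxy] at h1
          exact absurd h1 (Finset.mem_compl.mp h2)
        | right j =>
          rw [hFr, hFr] at hxy
          rw [g.injective hxy]
    · intro y
      by_cases hy : y ∈ S
      · obtain ⟨i, hi⟩ : ∃ i, f i = y := by
          have := Finset.range_orderEmbOfFin S hS
          rw [Set.ext_iff] at this
          exact (this y).mpr hy
        exact ⟨Fin.castAdd m i, by rw [hFl, hi]⟩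
      · obtain ⟨i, hi⟩ : ∃ i, g i = y := by
          have := Finset.range_orderEmbOfFin Sᶜ hSc
          rw [Set.ext_iff] at this
          exact (this y).mpr (Finset.mem_compl.mpr hy)
        exact ⟨Fin.natAdd m i, by rw [hFr, hi]⟩
  set σ : Equiv.Perm (Fin (m + m)) := Equiv.ofBijective F hbij with hσdef
  have hσ : ∀ x, σ x = F x := fun x => rfl
  refine ⟨σ, ⟨?_, ?_⟩, ?_⟩
  · intro i j hij hj
    have hi : (i : ℕ) < m := lt_trans (Fin.lt_def.mp hij) hj
    have hi' : i = Fin.castAdd m ⟨(i : ℕ), hi⟩ := Fin.ext rfl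
    have hj' : j = Fin.castAdd m ⟨(j : ℕ), hj⟩ := Fin.ext rfl
    rw [hi', hj', hσ, hσ, hFl, hFl]
    exact f.strictMono (Fin.lt_def.mp hij)
  · intro i j hij hi
    have hlt := Fin.lt_def.mp hij
    have hj : m ≤ (j : ℕ) := le_trans hi hlt.le
    have hi2 := i.isLt
    have hj2 := j.isLt
    have hpi : (i : ℕ) - m < m := by omega
    have hpj : (j : ℕ) - m < m := by omega
    have hi' : i = Fin.natAdd m ⟨(i : ℕ) - m, hpi⟩ :=
      Fin.ext (show (i : ℕ) = m + ((i : ℕ) - m) by omega)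
    have hj' : j = Fin.natAdd m ⟨(j : ℕ) - m, hpj⟩ :=
      Fin.ext (show (j : ℕ) = m + ((j : ℕ) - m) by omega)
    rw [hi', hj', hσ, hσ, hFr, hFr]
    exact g.strictMono (show (i : ℕ) - m < (j : ℕ) - m by omega)
  · ext x
    rw [fstSet, Finset.mem_image]
    constructor
    · rintro ⟨i, -, rfl⟩
      rw [hσ, hFl]
      exact Finset.orderEmbOfFin_mem S hS i
    · intro hx
      obtain ⟨i, hi⟩ : ∃ i, f i = x := by
        have hr := Finset.range_orderEmbOfFin S hS
        rw [Set.ext_iff] at hr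
        exact (hr x).mpr hx
      exact ⟨i, Finset.mem_univ i, by rw [hσ, hFl, hi]⟩

lemma card_shuffles (m : ℕ) :
    Fintype.card {σ : Equiv.Perm (Fin (m + m)) // IsShuffle m m σ} = (m + m).choose m := by
  have hb : Function.Bijective
      (fun σ : {σ : Equiv.Perm (Fin (m + m)) // IsShuffle m m σ} =>
        (⟨fstSet σ.1, card_fstSet σ.2⟩ : {s : Finset (Fin (m + m)) // s.card = m})) := by
    constructor
    · rintro ⟨σ, hσ⟩ ⟨τ, hτ⟩ h
      exact Subtype.ext (fstSet_injective hσ hτ (by simpa using h))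
    · rintro ⟨S, hS⟩
      obtain ⟨σ, hσ, hσS⟩ := exists_shuffle S hS
      exact ⟨⟨σ, hσ⟩, Subtype.ext hσS⟩
  rw [Fintype.card_congr (Equiv.ofBijective _ hb), Fintype.card_finset_len, Fintype.card_fin]

lemma card_partition (m : ℕ) :
    Fintype.card {σ : Equiv.Perm (Fin (m + m)) // IsShuffle m m σ ∧ Equiv.Perm.sign σ = 1} +
    Fintype.card {σ : Equiv.Perm (Fin (m + m)) // IsShuffle m m σ ∧ Equiv.Perm.sign σ = -1} =
    Fintype.card {σ : Equiv.Perm (Fin (m + m)) // IsShuffle m m σ} := by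
  classical
  have key := Finset.card_filter_add_card_filter_not
      (s := Finset.univ.filter (IsShuffle m m)) (p := fun σ => Equiv.Perm.sign σ = 1)
  rw [Finset.filter_filter, Finset.filter_filter] at key
  have hneg : (Finset.univ.filter fun σ : Equiv.Perm (Fin (m + m)) =>
      IsShuffle m m σ ∧ ¬Equiv.Perm.sign σ = 1) =
      (Finset.univ.filter fun σ => IsShuffle m m σ ∧ Equiv.Perm.sign σ = -1) := by
    apply Finset.filter_congr
    intro σ _
    have hne1 : (1 : ℤˣ) ≠ -1 := by decide
    have hne2 : (-1 : ℤˣ) ≠ 1 := by decide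
    rcases Int.units_eq_one_or (Equiv.Perm.sign σ) with h | h <;> simp [h, hne1, hne2]
  rw [hneg] at key
  rw [Fintype.card_subtype, Fintype.card_subtype, Fintype.card_subtype]
  exact key

lemma four_dvd_central (m : ℕ) (hm : 2 ≤ m) (hodd : Odd m) : 4 ∣ (m + m).choose m := by
  have h2m : m + m = 2 * m := by ring
  rw [h2m, ← Nat.centralBinom]
  obtain ⟨n, rfl⟩ : ∃ n, m = n + 1 := ⟨m - 1, by omega⟩
  have h1 := Nat.succ_mul_centralBinom_succ n
  obtain ⟨k, hk⟩ := Nat.two_dvd_centralBinom_of_one_le (n := n) (by omega)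
  have h4 : 4 ∣ (n + 1) * Nat.centralBinom (n + 1) := ⟨(2 * n + 1) * k, by rw [h1, hk]; ring⟩
  have hco : Nat.Coprime 4 (n + 1) := by
    have hnd : ¬ (2 ∣ (n + 1)) := by
      rw [Nat.odd_iff] at hodd; omega
    have := (Nat.prime_two.coprime_iff_not_dvd).mpr hnd
    have h22 : Nat.Coprime (2 ^ 2) (n + 1) := Nat.Coprime.pow_left 2 this
    simpa using h22
  exact hco.dvd_of_dvd_mul_left h4

/-! ### Main theorem -/

/-- For `m ≥ 2`, both `Sh₊(m,m)` and `Sh₋(m,m)` are even. -/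
theorem stmt14 (m : ℕ) (hm : 2 ≤ m) : Even (ShPos m m) ∧ Even (ShNeg m m) := by
  classical
  have hm0 : 0 < m := by omega
  have hββ := blockSwap_sq m
  -- the involution `σ ↦ σ * blockSwap m` on shuffles, with sign factor `(-1)^m`
  have hfpf : ∀ σ : Equiv.Perm (Fin (m + m)), σ * blockSwap m ≠ σ := by
    intro σ h
    have happ : (σ * blockSwap m) ⟨0, by omega⟩ = σ ⟨0, by omega⟩ := by rw [h]
    rw [Equiv.Perm.mul_apply] at happ
    have hB := congrArg Fin.val (σ.injective happ)
    rw [blockSwap_val_lt (⟨0, by omega⟩ : Fin (m + m)) hm0] at hB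
    simp at hB
    omega
  rcases Nat.even_or_odd m with heven | hodd
  · -- m even: fixed-point-free sign-preserving involution on each sign class
    have hsign : Equiv.Perm.sign (blockSwap m) = 1 := by
      rw [sign_blockSwap m hm0, Even.neg_one_pow heven]
    have key : ∀ s : ℤˣ, Even (Nat.card
        {σ : Equiv.Perm (Fin (m + m)) // IsShuffle m m σ ∧ Equiv.Perm.sign σ = s}) := by
      intro s
      rw [Nat.card_eq_fintype_card]
      have hmap : ∀ σ : {σ : Equiv.Perm (Fin (m + m)) //
          IsShuffle m m σ ∧ Equiv.Perm.sign σ = s},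
          IsShuffle m m (σ.1 * blockSwap m) ∧ Equiv.Perm.sign (σ.1 * blockSwap m) = s := by
        rintro ⟨σ, hσ, hs⟩
        exact ⟨hσ.mul_blockSwap, by rw [map_mul, hs, hsign, mul_one]⟩
      set f : {σ : Equiv.Perm (Fin (m + m)) // IsShuffle m m σ ∧ Equiv.Perm.sign σ = s} ≃
          {σ : Equiv.Perm (Fin (m + m)) // IsShuffle m m σ ∧ Equiv.Perm.sign σ = s} :=
        { toFun := fun σ => ⟨σ.1 * blockSwap m, hmap σ⟩
          invFun := fun σ => ⟨σ.1 * blockSwap m, hmap σ⟩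
          left_inv := fun σ => Subtype.ext (by
            show σ.1 * blockSwap m * blockSwap m = σ.1
            rw [mul_assoc, hββ, mul_one])
          right_inv := fun σ => Subtype.ext (by
            show σ.1 * blockSwap m * blockSwap m = σ.1
            rw [mul_assoc, hββ, mul_one]) } with hfdef
      refine even_card_of_fpf f ?_ ?_
      · refine Equiv.ext fun σ => ?_
        have hrw : (f * f) σ = f (f σ) := rfl
        rw [hrw]
        apply Subtype.ext
        show σ.1 * blockSwap m * blockSwap m = σ.1
        rw [mul_assoc, hββ, mul_one]
      · rintro ⟨σ, hσ⟩ h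
        exact hfpf σ (congrArg Subtype.val h)
    exact ⟨key 1, key (-1)⟩
  · -- m odd: `σ ↦ σ * blockSwap m` swaps the sign classes, so `Sh₊ = Sh₋`,
    -- and `Sh₊ + Sh₋ = C(2m, m)` is divisible by 4.
    have hsign : Equiv.Perm.sign (blockSwap m) = -1 := by
      rw [sign_blockSwap m hm0, Odd.neg_one_pow hodd]
    have hswap : ∀ s t : ℤˣ, s * (-1) = t →
        ∀ σ : {σ : Equiv.Perm (Fin (m + m)) // IsShuffle m m σ ∧ Equiv.Perm.sign σ = s},
        IsShuffle m m (σ.1 * blockSwap m) ∧ Equiv.Perm.sign (σ.1 * blockSwap m) = t := by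
      rintro s t hst ⟨σ, hσ, hs⟩
      exact ⟨hσ.mul_blockSwap, by rw [map_mul, hs, hsign, hst]⟩
    have hPN : ShPos m m = ShNeg m m := by
      rw [ShPos, ShNeg]
      refine Nat.card_congr
        { toFun := fun σ => ⟨σ.1 * blockSwap m, hswap 1 (-1) (by norm_num) σ⟩
          invFun := fun σ => ⟨σ.1 * blockSwap m, hswap (-1) 1 (by norm_num) σ⟩
          left_inv := fun σ => Subtype.ext (by
            show σ.1 * blockSwap m * blockSwap m = σ.1
            rw [mul_assoc, hββ, mul_one])
          right_inv := fun σ => Subtype.ext (by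
            show σ.1 * blockSwap m * blockSwap m = σ.1
            rw [mul_assoc, hββ, mul_one]) }
    have htot : ShPos m m + ShNeg m m = (m + m).choose m := by
      rw [ShPos, ShNeg, Nat.card_eq_fintype_card, Nat.card_eq_fintype_card,
        card_partition m, card_shuffles m]
    obtain ⟨k, hk⟩ := four_dvd_central m hm hodd
    have : ShPos m m = 2 * k := by omega
    constructor
    · exact ⟨k, by omega⟩
    · exact ⟨k, by omega⟩
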